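/- Let V = v₀…v_{n-1} be cyclically reduced, and suppose indices i, j satisfy the type-(3) linked-pair overlap condition: there exists r ∈ {1,…,n−1} maximal such that v_{i-r}…v_{i-1} = inverse of (v_j…v_{j+r-1}) reversed, i.e., v_{i-s} = v̄_{j+s-1} for all 1 ≤ s ≤ r. Then the free reduction of the concatenation V_{j,i} (segment from j to i) cancels exactly r letter pairs at the seam when V_{j,i} is cyclically reduced as a cyclic word; more precisely, the cyclic class of V_{j,i} equals the cyclic class of V_{j+r, i-r}, and ℓ(cyclic reduction of V_{j,i}) = ((i−j) mod n) − 2r. -/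

import Mathlib

/-- The word `v_i v_{i+1} … v_{i+len-1}` read off from the letter function `v`. -/
def seg {A : Type*} (v : ℕ → A) (i len : ℕ) : List A :=
  (List.range len).map (fun t => v (i + t))

/-- Freely reduced: no letter is followed by its formal inverse. -/
def FRed {A : Type*} (bar : A → A) (w : List A) : Prop :=
  w.Chain' (fun x y => y ≠ bar x)

/-- Cyclically reduced: every rotation is freely reduced. -/
def CRed {A : Type*} (bar : A → A) (w : List A) : Prop :=
  ∀ r, FRed bar (w.rotate r)

/-- `p`-fold concatenation power of a word. -/
def pw {A : Type*} (w : List A) (m : ℕ) : List A := (List.replicate m w).flatten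

/-- `w₂` is a cyclic rotation of `w₁`. -/
def IsRot {A : Type*} (w₁ w₂ : List A) : Prop := ∃ r, w₂ = w₁.rotate r

/-- The cyclic class of `w` is not that of a proper power. -/
def Nonpower {A : Type*} (w : List A) : Prop :=
  ¬ ∃ (u : List A) (p : ℕ), 2 ≤ p ∧ IsRot (pw u p) w

lemma seg_length {A : Type*} (v : ℕ → A) (i len : ℕ) : (seg v i len).length = len := by
  simp [seg]

lemma seg_getElem {A : Type*} (v : ℕ → A) (i len k : ℕ) (h : k < (seg v i len).length) :
    (seg v i len)[k] = v (i + k) := by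
  simp [seg]

lemma cred_of_double {A : Type*} (bar : A → A) (w : List A)
    (hw : FRed bar (w ++ w)) : CRed bar w := by
  intro rt
  rcases eq_or_ne w [] with h | h
  · simp [h, FRed, List.Chain']
  have hpos : 0 < w.length := List.length_pos_iff.2 h
  have h1 : w.rotate rt = w.rotate (rt % w.length) := (List.rotate_mod _ _).symm
  rw [h1, List.rotate_eq_drop_append_take (le_of_lt (Nat.mod_lt _ hpos))]
  set k := rt % w.length
  have hinf : (List.drop k w ++ List.take k w) <:+: (w ++ w) :=
    ⟨List.take k w, List.drop k w, by
      simp only [← List.append_assoc]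
      rw [List.take_append_drop, List.append_assoc, List.take_append_drop]⟩
  exact hw.infix hinf


/-- (Type-(3) seam cancellation.) If `r ∈ {1,…,n−1}` is maximal with
`v_{i−s} = v̄_{j+s−1}` for `1 ≤ s ≤ r`, then the last `r` letters of `V_{j,i}` are the
inverses, in reverse order, of its first `r` letters; cyclic reduction removes them,
so the cyclic class of `V_{j,i}` is that of the cyclically reduced word
`V_{j+r,i−r} = v_{j+r}…v_{i−r−1}`, of length `((i−j) mod n) − 2r`. -/
theorem stmt14 {A : Type*} (bar : A → A) (hbar : ∀ x, bar (bar x) = x)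
    (v : ℕ → A) (n : ℕ) (hn : 0 < n)
    (hper : ∀ t, v (t + n) = v t)
    (hred : ∀ t, v (t + 1) ≠ bar (v t))
    (i j : ℕ) (hi : i < n) (hj : j < n) (hij : i ≠ j)
    (r : ℕ) (hr1 : 1 ≤ r) (hr2 : r ≤ n - 1)
    (hoverlap : ∀ s, 1 ≤ s → s ≤ r → v (i + n - s) = bar (v (j + s - 1)))
    (hmax : r + 1 ≤ n - 1 → v (i + n - (r + 1)) ≠ bar (v (j + r)))
    (hlen : 2 * r < (i + n - j) % n) :
    seg v j ((i + n - j) % n) =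
      seg v j r ++ seg v (j + r) ((i + n - j) % n - 2 * r) ++
        (List.map bar (seg v j r)).reverse ∧
    CRed bar (seg v (j + r) ((i + n - j) % n - 2 * r)) ∧
    (seg v (j + r) ((i + n - j) % n - 2 * r)).length = (i + n - j) % n - 2 * r := by
  set L := (i + n - j) % n with hLdef
  have hLn : L < n := Nat.mod_lt _ hn
  have hkey : ∀ t, v (i + n - L + t) = v (j + t) := by
    rcases le_or_gt j i with h | h
    · have hL : L = i - j := by
        rw [hLdef, show i + n - j = (i - j) + n by omega, Nat.add_mod_right,
          Nat.mod_eq_of_lt (by omega)]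
      intro t
      rw [show i + n - L + t = (j + t) + n by omega, hper]
    · have hL : L = i + n - j := by rw [hLdef, Nat.mod_eq_of_lt (by omega)]
      intro t; congr 1; omega
  set m := L - 2 * r with hm
  have hm1 : 1 ≤ m := by omega
  -- the wrap condition
  have hwrap : v (j + r) ≠ bar (v (j + r + (m - 1))) := by
    have h1 : v (j + r + (m - 1)) = v (i + n - (r + 1)) := by
      have := hkey (L - r - 1)
      rw [show i + n - L + (L - r - 1) = i + n - (r + 1) by omega] at this
      rw [show j + r + (m - 1) = j + (L - r - 1) by omega, ← this]
    rw [h1]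
    intro hc
    exact hmax (by omega) (by rw [← hbar (v (i + n - (r + 1))), ← hc])
  refine ⟨?_, ?_, seg_length _ _ _⟩
  · apply List.ext_getElem
    · simp [seg_length]; omega
    · intro k h1 h2
      simp only [seg_length, List.length_append, List.length_map] at h1 h2
      rw [seg_getElem, List.getElem_append]
      by_cases hk2 : k < L - r
      · rw [dif_pos (by simp [seg_length]; omega), List.getElem_append]
        by_cases hk : k < r
        · rw [dif_pos (by simp [seg_length]; omega), seg_getElem]
        · rw [dif_neg (by simp [seg_length]; omega), seg_getElem]
          simp only [seg_length]
          congr 1; omega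
      · rw [dif_neg (by simp [seg_length]; omega)]
        rw [List.getElem_reverse, List.getElem_map, seg_getElem]
        have hs := hoverlap (L - k) (by omega) (by omega)
        have hk3 : v (j + k) = v (i + n - (L - k)) := by
          have := hkey k
          rw [show i + n - L + k = i + n - (L - k) by omega] at this
          exact this.symm
        rw [hk3, hs]
        congr 2
        simp only [seg_length, List.length_append, List.length_map]
        omega
  · apply cred_of_double
    rw [FRed, List.Chain', List.isChain_iff_getElem]
    intro t ht
    show (seg v (j+r) m ++ seg v (j+r) m).get ⟨t+1, ht⟩ ≠ bar ((seg v (j+r) m ++ seg v (j+r) m).get ⟨t, by omega⟩)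
    simp only [List.length_append, seg_length] at ht
    have hget : ∀ (a : ℕ) (ha : a < (seg v (j+r) m ++ seg v (j+r) m).length),
        (seg v (j+r) m ++ seg v (j+r) m).get ⟨a, ha⟩ =
          if a < m then v (j + r + a) else v (j + r + (a - m)) := by
      intro a ha
      rw [List.get_eq_getElem, List.getElem_append]
      by_cases h' : a < m
      · rw [dif_pos (by simpa [seg_length] using h'), seg_getElem, if_pos h']
      · rw [dif_neg (by simpa [seg_length] using h'), seg_getElem, if_neg h']
        simp [seg_length]
    rw [hget, hget]
    rcases lt_or_ge (t + 1) m with h' | h'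
    · rw [if_pos h', if_pos (by omega),
        show j + r + (t + 1) = (j + r + t) + 1 by ring]
      exact hred _
    rcases eq_or_lt_of_le h' with h'' | h''
    · rw [if_neg (by omega), if_pos (by omega), show t + 1 - m = 0 by omega]
      simpa [show t = m - 1 by omega] using hwrap
    · rw [if_neg (by omega), if_neg (by omega), show t + 1 - m = (t - m) + 1 by omega,
        show j + r + (t - m + 1) = (j + r + (t - m)) + 1 by ring]
      exact hred _
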